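/- Let (p_n) be a sequence of integers with p_n ≥ 2 for all n and p_n → ∞, and let (κ_n) be a sequence in (0,∞) with κ_n/p_n → ∞. Then e₁(p_n,κ_n) → 1, the sequence κ_n² ẽ₂(p_n,κ_n)/p_n is bounded, and (κ_n/p_n) f₂(p_n,κ_n) → 1 as n → ∞. -/

import Mathlib

open MeasureTheory intervalIntegral Filter

/-- `mInt p κ ℓ = ∫_{-1}^1 u^ℓ (1-u²)^{(p-3)/2} exp(κ u) du`. -/
noncomputable def mInt (p : ℕ) (κ : ℝ) (ℓ : ℕ) : ℝ :=
  ∫ u in (-1 : ℝ)..1, u ^ ℓ * (1 - u ^ 2) ^ (((p : ℝ) - 3) / 2) * Real.exp (κ * u)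

/-- `e₁(p,κ) = E[U]` under `FvML_p(θ,κ)`. -/
noncomputable def e1 (p : ℕ) (κ : ℝ) : ℝ := mInt p κ 1 / mInt p κ 0

/-- `e₂(p,κ) = E[U²]` under `FvML_p(θ,κ)`. -/
noncomputable def e2 (p : ℕ) (κ : ℝ) : ℝ := mInt p κ 2 / mInt p κ 0

/-- `ẽ₂(p,κ) = Var[U]` under `FvML_p(θ,κ)`. -/
noncomputable def etilde2 (p : ℕ) (κ : ℝ) : ℝ := e2 p κ - (e1 p κ) ^ 2

/-- `f₂(p,κ) = E[1-U²]` under `FvML_p(θ,κ)`. -/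
noncomputable def f2 (p : ℕ) (κ : ℝ) : ℝ := 1 - e2 p κ

section basic
variable {q : ℕ} {κ : ℝ}

lemma cont_aux (c : ℝ) (hc : 0 ≤ c) (κ : ℝ) (ℓ : ℕ) :
    Continuous fun u : ℝ => u ^ ℓ * (1 - u ^ 2) ^ c * Real.exp (κ * u) := by
  have h1 : Continuous fun u : ℝ => (1 - u ^ 2) ^ c :=
    (Real.continuous_rpow_const hc).comp (by continuity)
  exact ((continuous_pow ℓ).mul h1).mul ((Real.continuous_exp).comp (by continuity))

lemma integrable_aux (c : ℝ) (hc : 0 ≤ c) (κ : ℝ) (ℓ : ℕ) :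
    IntervalIntegrable (fun u : ℝ => u ^ ℓ * (1 - u ^ 2) ^ c * Real.exp (κ * u))
      volume (-1) 1 :=
  (cont_aux c hc κ ℓ).intervalIntegrable _ _

lemma hc_of (hq : 3 ≤ q) : (0:ℝ) ≤ ((q : ℝ) - 3) / 2 := by
  have : (3:ℝ) ≤ (q:ℝ) := by exact_mod_cast hq
  linarith

lemma mInt_integrable (hq : 3 ≤ q) (κ : ℝ) (ℓ : ℕ) :
    IntervalIntegrable (fun u : ℝ => u ^ ℓ * (1 - u ^ 2) ^ (((q : ℝ) - 3) / 2) * Real.exp (κ * u))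
      volume (-1) 1 := integrable_aux _ (hc_of hq) κ ℓ

lemma m0_pos (hq : 3 ≤ q) (κ : ℝ) : 0 < mInt q κ 0 := by
  apply intervalIntegral_pos_of_pos_on (mInt_integrable hq κ 0)
  · intro x hx
    have h1 : 0 < 1 - x ^ 2 := by nlinarith [hx.1, hx.2]
    have := Real.rpow_pos_of_pos h1 (((q : ℝ) - 3) / 2)
    positivity
  · norm_num

lemma m2_nonneg (hq : 3 ≤ q) (κ : ℝ) : 0 ≤ mInt q κ 2 := by
  apply intervalIntegral.integral_nonneg (by norm_num)
  intro u hu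
  have h1 : (0:ℝ) ≤ 1 - u ^ 2 := by nlinarith [hu.1, hu.2]
  have := Real.rpow_nonneg h1 (((q : ℝ) - 3) / 2)
  positivity

end basic

section ident
variable {q : ℕ} {κ : ℝ}

lemma mInt_shift (q : ℕ) (κ : ℝ) (ℓ : ℕ) :
    mInt (q+2) κ ℓ = ∫ u in (-1:ℝ)..1,
      u ^ ℓ * (1 - u ^ 2) ^ (((q:ℝ) - 1) / 2) * Real.exp (κ * u) := by
  have h : (((q+2 : ℕ) : ℝ) - 3) / 2 = ((q:ℝ) - 1) / 2 := by push_cast; ring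
  rw [mInt]; simp only [h]

lemma mInt_step (hq : 4 ≤ q) (κ : ℝ) (ℓ : ℕ) :
    mInt q κ ℓ - mInt q κ (ℓ+2) = mInt (q+2) κ ℓ := by
  have hq3 : 3 ≤ q := by omega
  have hc : (0:ℝ) < ((q:ℝ) - 3) / 2 + 1 := by
    have := hc_of hq3; linarith
  rw [mInt_shift, mInt, mInt, ← intervalIntegral.integral_sub (mInt_integrable hq3 κ ℓ)
    (mInt_integrable hq3 κ (ℓ+2))]
  apply intervalIntegral.integral_congr
  intro u hu
  rw [Set.uIcc_of_le (by norm_num : (-1:ℝ) ≤ 1)] at hu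
  have h0 : (0:ℝ) ≤ 1 - u ^ 2 := by nlinarith [hu.1, hu.2]
  have he : ((q:ℝ) - 1) / 2 = ((q:ℝ) - 3) / 2 + 1 := by ring
  beta_reduce
  rcases eq_or_lt_of_le h0 with h | h
  · have h4 : (4:ℝ) ≤ (q:ℝ) := by exact_mod_cast hq
    rw [← h, Real.zero_rpow (by linarith : ((q:ℝ) - 3) / 2 ≠ 0), he,
      Real.zero_rpow (by linarith : ((q:ℝ) - 3) / 2 + 1 ≠ 0)]
    ring
  · rw [he, Real.rpow_add_one (ne_of_gt h)]
    ring

lemma ibpA (hq : 4 ≤ q) (κ : ℝ) :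
    κ * mInt (q+2) κ 0 = ((q:ℝ) - 1) * mInt q κ 1 := by
  have hq3 : 3 ≤ q := by omega
  set e : ℝ := ((q:ℝ) - 1) / 2 with he
  have he1 : (1:ℝ) ≤ e := by
    have : (3:ℝ) ≤ (q:ℝ) := by exact_mod_cast hq3
    rw [he]; linarith
  have hee : e - 1 = ((q:ℝ) - 3) / 2 := by rw [he]; ring
  have hder : ∀ u : ℝ, HasDerivAt (fun u : ℝ => (1 - u^2) ^ e * Real.exp (κ * u))
      (κ * (u^0 * (1 - u^2) ^ e * Real.exp (κ * u))
        - ((q:ℝ) - 1) * (u^1 * (1 - u^2) ^ (e-1) * Real.exp (κ * u))) u := by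
    intro u
    have h1 : HasDerivAt (fun u : ℝ => 1 - u^2) (-(2*u)) u := by
      simpa using ((hasDerivAt_pow 2 u).const_sub 1)
    have h2 := h1.rpow_const (p := e) (Or.inr he1)
    have h3 : HasDerivAt (fun u : ℝ => Real.exp (κ * u)) (Real.exp (κ * u) * κ) u := by
      simpa using ((hasDerivAt_id u).const_mul κ).exp
    have h4 := h2.mul h3
    exact h4.congr_deriv (by rw [he]; ring)
  have hint : IntervalIntegrable (fun u : ℝ =>
      κ * (u^0 * (1 - u^2) ^ e * Real.exp (κ * u))
        - ((q:ℝ) - 1) * (u^1 * (1 - u^2) ^ (e-1) * Real.exp (κ * u))) volume (-1) 1 := by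
    exact ((integrable_aux e (by linarith) κ 0).const_mul κ).sub
      (((integrable_aux (e-1) (by linarith) κ 1)).const_mul _)
  have key := intervalIntegral.integral_eq_sub_of_hasDerivAt (fun u _ => hder u) hint
  rw [intervalIntegral.integral_sub ((integrable_aux e (by linarith) κ 0).const_mul κ)
      (((integrable_aux (e-1) (by linarith) κ 1)).const_mul _),
    intervalIntegral.integral_const_mul, intervalIntegral.integral_const_mul] at key
  have hF1 : (1 - (1:ℝ)^2) ^ e * Real.exp (κ * 1) = 0 := by
    norm_num
    exact Real.zero_rpow (by linarith)
  have hFm1 : (1 - (-1:ℝ)^2) ^ e * Real.exp (κ * (-1)) = 0 := by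
    norm_num
    exact Real.zero_rpow (by linarith)
  rw [hF1, hFm1, sub_zero] at key
  rw [mInt_shift, mInt]
  simp only [hee] at key
  linarith [key]

lemma ibpB (hq : 4 ≤ q) (κ : ℝ) :
    κ * mInt (q+2) κ 1 = ((q:ℝ) - 1) * mInt q κ 2 - mInt (q+2) κ 0 := by
  have hq3 : 3 ≤ q := by omega
  have hq3' : (3:ℝ) ≤ (q:ℝ) := by exact_mod_cast hq3
  set e : ℝ := ((q:ℝ) - 1) / 2 with he
  have he1 : (1:ℝ) ≤ e := by rw [he]; linarith
  have hee : e - 1 = ((q:ℝ) - 3) / 2 := by rw [he]; ring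
  have hder : ∀ u : ℝ, HasDerivAt (fun u : ℝ => u * ((1 - u^2) ^ e * Real.exp (κ * u)))
      ((u^0 * (1 - u^2) ^ e * Real.exp (κ * u)
        - ((q:ℝ) - 1) * (u^2 * (1 - u^2) ^ (e-1) * Real.exp (κ * u)))
        + κ * (u^1 * (1 - u^2) ^ e * Real.exp (κ * u))) u := by
    intro u
    have h1 : HasDerivAt (fun u : ℝ => 1 - u^2) (-(2*u)) u := by
      simpa using ((hasDerivAt_pow 2 u).const_sub 1)
    have h2 := h1.rpow_const (p := e) (Or.inr he1)
    have h3 : HasDerivAt (fun u : ℝ => Real.exp (κ * u)) (Real.exp (κ * u) * κ) u := by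
      simpa using ((hasDerivAt_id u).const_mul κ).exp
    have h4 := (hasDerivAt_id u).mul (h2.mul h3)
    simp only [id_eq] at h4
    exact h4.congr_deriv (by simp only [Pi.mul_apply]; rw [he]; ring)
  have i1 := integrable_aux e (by linarith) κ 0
  have i2 := (integrable_aux (e-1) (by linarith) κ 2).const_mul ((q:ℝ) - 1)
  have i3 := (integrable_aux e (by linarith) κ 1).const_mul κ
  have hint : IntervalIntegrable (fun u : ℝ =>
      (u^0 * (1 - u^2) ^ e * Real.exp (κ * u)
        - ((q:ℝ) - 1) * (u^2 * (1 - u^2) ^ (e-1) * Real.exp (κ * u)))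
        + κ * (u^1 * (1 - u^2) ^ e * Real.exp (κ * u))) volume (-1) 1 :=
    (i1.sub i2).add i3
  have key := intervalIntegral.integral_eq_sub_of_hasDerivAt (fun u _ => hder u) hint
  rw [intervalIntegral.integral_add (i1.sub i2) i3,
    intervalIntegral.integral_sub i1 i2,
    intervalIntegral.integral_const_mul, intervalIntegral.integral_const_mul] at key
  have hne : e ≠ 0 := ne_of_gt (by linarith)
  have hF1 : (1:ℝ) * ((1 - (1:ℝ)^2) ^ e * Real.exp (κ * 1)) = 0 := by
    norm_num [Real.zero_rpow hne]
  have hFm1 : (-1:ℝ) * ((1 - (-1:ℝ)^2) ^ e * Real.exp (κ * (-1))) = 0 := by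
    norm_num [Real.zero_rpow hne]
  rw [hF1, hFm1, sub_zero] at key
  rw [mInt_shift, mInt_shift, mInt]
  simp only [hee] at key
  linarith [key]

lemma CS (hq : 3 ≤ q) (κ : ℝ) : (mInt q κ 1)^2 ≤ mInt q κ 0 * mInt q κ 2 := by
  have hc := hc_of hq
  set m0 := mInt q κ 0 with hm0def
  set m1 := mInt q κ 1 with hm1def
  set m2 := mInt q κ 2 with hm2def
  have hm0 : 0 < m0 := m0_pos hq κ
  have i0 := integrable_aux (((q:ℝ) - 3)/2) hc κ 0
  have i1 := integrable_aux (((q:ℝ) - 3)/2) hc κ 1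
  have i2 := integrable_aux (((q:ℝ) - 3)/2) hc κ 2
  have h0 : 0 ≤ ∫ u in (-1:ℝ)..1,
      (m1 - m0 * u)^2 * ((1 - u^2) ^ (((q:ℝ) - 3)/2) * Real.exp (κ * u)) := by
    apply intervalIntegral.integral_nonneg (by norm_num)
    intro u hu
    have h1 : (0:ℝ) ≤ 1 - u ^ 2 := by nlinarith [hu.1, hu.2]
    have h2 := Real.rpow_nonneg h1 (((q:ℝ) - 3)/2)
    positivity
  have hpt : ∀ u : ℝ, (m1 - m0 * u)^2 * ((1 - u^2) ^ (((q:ℝ) - 3)/2) * Real.exp (κ * u))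
      = m1^2 * (u^0 * (1 - u^2) ^ (((q:ℝ) - 3)/2) * Real.exp (κ * u))
        - (2*m0*m1) * (u^1 * (1 - u^2) ^ (((q:ℝ) - 3)/2) * Real.exp (κ * u))
        + m0^2 * (u^2 * (1 - u^2) ^ (((q:ℝ) - 3)/2) * Real.exp (κ * u)) := by
    intro u; ring
  rw [intervalIntegral.integral_congr (g := fun u : ℝ =>
      m1^2 * (u^0 * (1 - u^2) ^ (((q:ℝ) - 3)/2) * Real.exp (κ * u))
        - (2*m0*m1) * (u^1 * (1 - u^2) ^ (((q:ℝ) - 3)/2) * Real.exp (κ * u))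
        + m0^2 * (u^2 * (1 - u^2) ^ (((q:ℝ) - 3)/2) * Real.exp (κ * u)))
      (fun u _ => hpt u)] at h0
  rw [intervalIntegral.integral_add ((i0.const_mul _).sub (i1.const_mul _)) (i2.const_mul _),
    intervalIntegral.integral_sub (i0.const_mul _) (i1.const_mul _),
    intervalIntegral.integral_const_mul, intervalIntegral.integral_const_mul,
    intervalIntegral.integral_const_mul] at h0
  rw [hm0def, hm1def, hm2def, mInt, mInt, mInt] at *
  nlinarith [h0, hm0]

lemma m1_pos (hq : 4 ≤ q) {κ : ℝ} (hκ : 0 < κ) : 0 < mInt q κ 1 := by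
  have hA := ibpA hq κ
  have hM := m0_pos (by omega : 3 ≤ q + 2) κ
  have hq4 : (4:ℝ) ≤ (q:ℝ) := by exact_mod_cast hq
  nlinarith [mul_pos hκ hM]


set_option maxHeartbeats 1000000 in
lemma arith_bounds (r κ m0 m1 m2 M0 M1 M2 N0 : ℝ) (hr : 4 ≤ r) (hκ : 0 < κ)
    (hm0 : 0 < m0) (hm1 : 0 < m1) (hM0 : 0 < M0) (hM1 : 0 < M1)
    (hA : κ * M0 = (r - 1) * m1) (hB : κ * M1 = (r - 1) * m2 - M0)
    (hstep : m0 - m2 = M0) (hA2 : κ * N0 = (r + 1) * M1) (hstep2 : M0 - M2 = N0)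
    (hCS : m1^2 ≤ m0 * m2) (hCS2 : M1^2 ≤ M0 * M2) :
    κ/(κ + r) ≤ m1/m0 ∧ m1/m0 ≤ 1 ∧ (m1/m0)^2 ≤ m2/m0 ∧
      κ^2 * (m2/m0 - (m1/m0)^2) ≤ r ∧ 1 - m2/m0 = (r-1)*(m1/m0)/κ := by
  set x := m1/m0 with hxdef
  set y := M1/M0 with hydef
  clear_value x y
  have hx_pos : 0 < x := hxdef ▸ div_pos hm1 hm0
  have hy_pos : 0 < y := hydef ▸ div_pos hM1 hM0
  -- key scalar identities
  have key : κ * m2 = κ * m0 - (r - 1) * m1 := by linear_combination (-κ)*hstep - hA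
  have key2 : κ * M2 = κ * M0 - (r + 1) * M1 := by linear_combination (-κ)*hstep2 - hA2
  have he2 : m2/m0 = 1 - (r - 1) * x / κ := by
    rw [hxdef]; field_simp; linear_combination key
  have hE2 : M2/M0 = 1 - (r + 1) * y / κ := by
    rw [hydef]; field_simp; linear_combination key2
  -- quadratic inequalities
  have hsq : x^2 ≤ m2/m0 := by
    rw [hxdef, div_pow, div_le_div_iff₀ (by positivity) hm0]
    nlinarith [hCS, hm0]
  have hsq2 : y^2 ≤ M2/M0 := by
    rw [hydef, div_pow, div_le_div_iff₀ (by positivity) hM0]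
    nlinarith [hCS2, hM0]
  have hquad : κ * x^2 + (r - 1) * x - κ ≤ 0 := by
    have := mul_le_mul_of_nonneg_left hsq (le_of_lt hκ)
    rw [he2] at this
    have hκ' : κ ≠ 0 := ne_of_gt hκ
    field_simp at this
    nlinarith [this]
  have hquad2 : κ * y^2 + (r + 1) * y - κ ≤ 0 := by
    have := mul_le_mul_of_nonneg_left hsq2 (le_of_lt hκ)
    rw [hE2] at this
    have hκ' : κ ≠ 0 := ne_of_gt hκ
    field_simp at this
    nlinarith [this]
  have hx1 : x ≤ 1 := by
    nlinarith [hquad, hx_pos, hκ, mul_pos (mul_pos hκ hx_pos) hx_pos,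
      mul_nonneg (by nlinarith : (0:ℝ) ≤ r - 1) hx_pos.le, mul_pos hκ hx_pos]
  -- recurrence x = κ/(κ y + r)
  have hden : 0 < κ * y + r := by positivity
  have hrec : x = κ / (κ * y + r) := by
    rw [hxdef, hydef]
    rw [div_eq_div_iff (ne_of_gt hm0) (by rw [hydef] at hden; exact ne_of_gt hden)]
    field_simp
    nlinarith [hA, hB, hstep, hM0, hm0]
  -- sqrt facts
  set S := Real.sqrt ((r + 1)^2 + 4*κ^2) with hSdef
  have hS0 : 0 ≤ S := Real.sqrt_nonneg _
  have hS2 : S^2 = (r + 1)^2 + 4*κ^2 := Real.sq_sqrt (by positivity)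
  have hS2κ : 2*κ ≤ S := by
    rw [hSdef, show (2*κ) = Real.sqrt ((2*κ)^2) from (Real.sqrt_sq (by positivity)).symm]
    apply Real.sqrt_le_sqrt; nlinarith
  have hSub : S ≤ r + 1 + 2*κ := by
    rw [hSdef, show (r + 1 + 2*κ) = Real.sqrt ((r + 1 + 2*κ)^2) from
      (Real.sqrt_sq (by positivity)).symm]
    apply Real.sqrt_le_sqrt; nlinarith
  have hy_ub : 2*κ*y ≤ S - (r + 1) := by
    have hA2' : (2*κ*y + (r+1))^2 ≤ S^2 := by
      nlinarith only [mul_le_mul_of_nonneg_left hquad2 hκ.le, hS2]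
    have hApos : 0 < 2*κ*y + (r+1) := by
      have := mul_pos hκ hy_pos
      linarith only [this, hr]
    nlinarith only [hA2', hApos, hS0]
  have hden_ub : κ * y + r ≤ (S + r - 1) / 2 := by linarith [hy_ub]
  have hT : 0 < S + r - 1 := by linarith [hS0, hr]
  have hhalf : 2*κ/(S + r - 1) = κ/((S + r - 1)/2) := by
    rw [div_div_eq_mul_div]; ring
  have hhalfpos : 0 < (S + r - 1)/2 := by linarith [hT]
  have hx_lb : 2*κ/(S + r - 1) ≤ x := by
    rw [hrec, hhalf]
    exact (div_le_div_iff_of_pos_left hκ hhalfpos hden).mpr hden_ub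
  have hx_lb2 : κ / (κ + r) ≤ x := by
    refine le_trans ?_ hx_lb
    rw [hhalf]
    exact (div_le_div_iff_of_pos_left hκ (by positivity) hhalfpos).mpr (by nlinarith [hSub])
  -- variance upper bound
  have hvar_ub : κ^2 * (m2/m0 - x^2) ≤ r := by
    have hval : κ^2 * (m2/m0 - x^2) = κ^2 - (r-1)*κ*x - κ^2*x^2 := by
      rw [he2]; field_simp
    rw [hval]
    have hTpos : 0 < S + (r - 1) := by linarith only [hS0, hr]
    have hT2 : 4*κ^2 ≤ (S + (r - 1))^2 := by
      have a1 : 0 ≤ S + (r-1) - 2*κ := by linarith only [hS2κ, hr]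
      have a2 : 0 ≤ S + (r-1) + 2*κ := by linarith only [hS0, hr, hκ]
      nlinarith only [mul_nonneg a1 a2]
    set xlb : ℝ := 2*κ/(S + (r - 1)) with hxlbdef
    have hxlbT : xlb * (S + (r - 1)) = 2*κ := by
      rw [hxlbdef]; field_simp
    have hxlb_le : xlb ≤ x := by
      rw [hxlbdef]
      refine le_trans (le_of_eq ?_) hx_lb
      ring_nf
    have hxlb_pos : 0 < xlb := by rw [hxlbdef]; positivity
    have h4p : (S + (r - 1))^2 - 2*(r-1)*(S + (r - 1)) - 4*κ^2 = 4*r := by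
      linear_combination hS2
    have hmono : κ^2 - (r-1)*κ*x - κ^2*x^2 ≤ κ^2 - (r-1)*κ*xlb - κ^2*xlb^2 := by
      nlinarith only [mul_nonneg (mul_nonneg (by linarith only [hr] : (0:ℝ) ≤ r - 1) hκ.le)
          (sub_nonneg.mpr hxlb_le),
        mul_nonneg (mul_nonneg hκ.le hκ.le)
          (mul_nonneg (by linarith only [hxlb_pos, hx_pos] : (0:ℝ) ≤ xlb + x)
            (sub_nonneg.mpr hxlb_le))]
    have hId : (κ^2 - (r-1)*κ*xlb - κ^2*xlb^2) * (S + (r - 1))^2 = 4*r*κ^2 := by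
      linear_combination (κ^2)*h4p + (-(r-1)*κ*(S + (r-1)) - κ^2*(xlb*(S + (r-1)) + 2*κ))*hxlbT
    nlinarith only [hId, hmono, mul_pos hTpos hTpos,
      mul_nonneg (by linarith only [hr] : (0:ℝ) ≤ r) (sub_nonneg.mpr hT2)]
  -- f2 identity
  have hf2 : 1 - m2/m0 = (r-1)*x/κ := by rw [he2]; ring
  exact ⟨hx_lb2, hx1, hsq, hvar_ub, hf2⟩

lemma main_bounds (q : ℕ) (hq : 4 ≤ q) {κ : ℝ} (hκ : 0 < κ) :
    κ / (κ + (q:ℝ)) ≤ e1 q κ ∧ e1 q κ ≤ 1 ∧ 0 ≤ etilde2 q κ ∧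
      κ^2 * etilde2 q κ ≤ (q:ℝ) ∧ f2 q κ = ((q:ℝ) - 1) * e1 q κ / κ := by
  have hq2 : 4 ≤ q + 2 := by omega
  have hq4 : (4:ℝ) ≤ (q:ℝ) := by exact_mod_cast hq
  have hA := ibpA hq κ
  have hB := ibpB hq κ
  have hstep := mInt_step hq κ 0
  have hA2 := ibpA hq2 κ
  have hc : ((q+2:ℕ):ℝ) - 1 = (q:ℝ) + 1 := by push_cast; ring
  rw [hc] at hA2
  have hstep2 := mInt_step hq2 κ 0
  obtain ⟨h1, h2, h3, h4, h5⟩ := arith_bounds (q:ℝ) κ (mInt q κ 0) (mInt q κ 1) (mInt q κ 2)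
    (mInt (q+2) κ 0) (mInt (q+2) κ 1) (mInt (q+2) κ 2) (mInt (q+2+2) κ 0) hq4 hκ
    (m0_pos (by omega) κ) (m1_pos hq hκ) (m0_pos (by omega) κ) (m1_pos hq2 hκ)
    hA hB hstep hA2 hstep2 (CS (by omega) κ) (CS (by omega) κ)
  refine ⟨h1, h2, ?_, ?_, ?_⟩
  · show 0 ≤ e2 q κ - (e1 q κ)^2
    rw [e1, e2]
    linarith [h3]
  · show κ^2 * (e2 q κ - (e1 q κ)^2) ≤ (q:ℝ)
    rw [e1, e2]
    exact h4
  · show 1 - e2 q κ = _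
    rw [e1, e2]
    exact h5

theorem moments_regime_kappa_over_p_to_infty' (p : ℕ → ℕ) (hp2 : ∀ n, 2 ≤ p n)
    (hp : Tendsto (fun n => (p n : ℝ)) atTop atTop)
    (κ : ℕ → ℝ) (hκ : ∀ n, 0 < κ n)
    (hκp : Tendsto (fun n => κ n / (p n : ℝ)) atTop atTop) :
    Tendsto (fun n => e1 (p n) (κ n)) atTop (nhds 1) ∧
      (∃ C : ℝ, ∀ n, |(κ n) ^ 2 * etilde2 (p n) (κ n) / (p n : ℝ)| ≤ C) ∧
      Tendsto (fun n => (κ n / (p n : ℝ)) * f2 (p n) (κ n)) atTop (nhds 1) := by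
  have hev4 : ∀ᶠ n in atTop, 4 ≤ p n := by
    filter_upwards [hp.eventually_ge_atTop 4] with n hn
    exact_mod_cast hn
  have hbnd := hev4.mono fun n hn => main_bounds (p n) hn (hκ n)
  -- p/κ → 0
  have hpκ0 : Tendsto (fun n => (p n : ℝ) / κ n) atTop (nhds 0) := by
    have := hκp.inv_tendsto_atTop
    simpa [Pi.inv_def, inv_div] using this
  -- e1 → 1
  have hlow : Tendsto (fun n => κ n / (κ n + (p n : ℝ))) atTop (nhds 1) := by
    have h1 : Tendsto (fun n => 1 + (p n : ℝ) / κ n) atTop (nhds 1) := by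
      have := tendsto_const_nhds (x := (1:ℝ)) (f := atTop (α := ℕ)) |>.add hpκ0
      simpa using this
    have h2 := h1.inv₀ (by norm_num : (1:ℝ) ≠ 0)
    rw [inv_one] at h2
    refine h2.congr fun n => ?_
    have hκn := hκ n
    have hpn : (0:ℝ) ≤ (p n : ℝ) := Nat.cast_nonneg _
    rw [show (1:ℝ) + (p n : ℝ) / κ n = (κ n + (p n : ℝ)) / κ n from by field_simp, inv_div]
  have he1 : Tendsto (fun n => e1 (p n) (κ n)) atTop (nhds 1) := by
    apply tendsto_of_tendsto_of_tendsto_of_le_of_le' hlow tendsto_const_nhds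
    · filter_upwards [hbnd] with n hn; exact hn.1
    · filter_upwards [hbnd] with n hn; exact hn.2.1
  refine ⟨he1, ?_, ?_⟩
  · -- boundedness
    have hev1 : ∀ᶠ n in atTop, |(κ n) ^ 2 * etilde2 (p n) (κ n) / (p n : ℝ)| ≤ 1 := by
      filter_upwards [hbnd, hev4] with n hn h4n
      have hpn : (0:ℝ) < (p n : ℝ) := by
        have : (4:ℝ) ≤ (p n : ℝ) := by exact_mod_cast h4n
        linarith
      rw [abs_le]
      constructor
      · have : 0 ≤ (κ n)^2 * etilde2 (p n) (κ n) / (p n : ℝ) :=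
          div_nonneg (mul_nonneg (sq_nonneg _) hn.2.2.1) hpn.le
        linarith
      · rw [div_le_one hpn]
        exact hn.2.2.2.1
    obtain ⟨N, hN⟩ := eventually_atTop.1 hev1
    refine ⟨1 + ∑ i ∈ Finset.range N, |(κ i) ^ 2 * etilde2 (p i) (κ i) / (p i : ℝ)|, fun n => ?_⟩
    have hsum : 0 ≤ ∑ i ∈ Finset.range N, |(κ i) ^ 2 * etilde2 (p i) (κ i) / (p i : ℝ)| :=
      Finset.sum_nonneg fun i _ => abs_nonneg _
    by_cases hn : N ≤ n
    · linarith [hN n hn]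
    · have hmem : n ∈ Finset.range N := Finset.mem_range.mpr (lt_of_not_ge hn)
      have := Finset.single_le_sum
        (f := fun i => |(κ i) ^ 2 * etilde2 (p i) (κ i) / (p i : ℝ)|)
        (fun i _ => abs_nonneg _) hmem
      linarith
  · -- (κ/p) f2 → 1
    have hfrac : Tendsto (fun n => ((p n : ℝ) - 1) / (p n : ℝ)) atTop (nhds 1) := by
      have hinv : Tendsto (fun n => ((p n : ℝ))⁻¹) atTop (nhds 0) :=
        tendsto_inv_atTop_zero.comp hp
      have h1 : Tendsto (fun n => 1 - ((p n : ℝ))⁻¹) atTop (nhds 1) := by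
        have := tendsto_const_nhds (x := (1:ℝ)) (f := atTop (α := ℕ)) |>.sub hinv
        simpa using this
      apply h1.congr'
      filter_upwards [hev4] with n hn
      have hpn : ((p n : ℝ)) ≠ 0 := by
        have : (4:ℝ) ≤ (p n : ℝ) := by exact_mod_cast hn
        linarith
      field_simp
    have hmul := hfrac.mul he1
    rw [mul_one] at hmul
    apply hmul.congr'
    filter_upwards [hbnd, hev4] with n hn h4n
    have hκn : κ n ≠ 0 := ne_of_gt (hκ n)
    have hpn : ((p n : ℝ)) ≠ 0 := by
      have : (4:ℝ) ≤ (p n : ℝ) := by exact_mod_cast h4n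
      linarith
    rw [hn.2.2.2.2]
    field_simp

theorem moments_regime_kappa_over_p_to_infty (p : ℕ → ℕ) (hp2 : ∀ n, 2 ≤ p n)
    (hp : Tendsto (fun n => (p n : ℝ)) atTop atTop)
    (κ : ℕ → ℝ) (hκ : ∀ n, 0 < κ n)
    (hκp : Tendsto (fun n => κ n / (p n : ℝ)) atTop atTop) :
    Tendsto (fun n => e1 (p n) (κ n)) atTop (nhds 1) ∧
      (∃ C : ℝ, ∀ n, |(κ n) ^ 2 * etilde2 (p n) (κ n) / (p n : ℝ)| ≤ C) ∧
      Tendsto (fun n => (κ n / (p n : ℝ)) * f2 (p n) (κ n)) atTop (nhds 1) := by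
  exact moments_regime_kappa_over_p_to_infty' p hp2 hp κ hκ hκp
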